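/- Fix K₁ > 0. There exists a constant C > 0 such that for every squarefree positive integer q, ∑_{c | q, ω(c) ≥ √ω(q)} K₁^{ω(c)}·c^{-1/2} ≤ C·exp(−C⁻¹·√ω(q)), where the sum is over divisors c of q with at least √ω(q) prime factors. -/

import Mathlib

open Finset

private lemma aux_sum_one_div_sqrt_le (k : ℕ) :
    ∑ j ∈ Finset.range k, 1 / Real.sqrt (j + 1) ≤ 2 * Real.sqrt k := by
  induction k with
  | zero => simp
  | succ n ih =>
    rw [Finset.sum_range_succ]
    have h1 : (0:ℝ) ≤ (n:ℝ) := Nat.cast_nonneg n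
    have hpos : 0 < Real.sqrt ((n:ℝ)+1) := Real.sqrt_pos.mpr (by linarith)
    have hsq : Real.sqrt ((n:ℝ)+1) * Real.sqrt ((n:ℝ)+1) = (n:ℝ)+1 :=
      Real.mul_self_sqrt (by linarith)
    have hsqn : Real.sqrt (n:ℝ) * Real.sqrt (n:ℝ) = (n:ℝ) := Real.mul_self_sqrt h1
    have h2 : Real.sqrt (n:ℝ) * Real.sqrt ((n:ℝ)+1) ≤ (n:ℝ) + 1/2 := by
      nlinarith [sq_nonneg (Real.sqrt (n:ℝ) - Real.sqrt ((n:ℝ)+1))]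
    have key : 1 / Real.sqrt ((n:ℝ)+1) ≤ 2 * Real.sqrt ((n:ℝ)+1) - 2 * Real.sqrt (n:ℝ) := by
      rw [div_le_iff₀ hpos]
      nlinarith
    have hcast : Real.sqrt ((n:ℕ)+1 : ℕ) = Real.sqrt ((n:ℝ)+1) := by push_cast; ring_nf
    rw [hcast]
    linarith

private lemma aux_sqrt_prod (s : Finset ℕ) :
    Real.sqrt (∏ p ∈ s, (p:ℝ)) = ∏ p ∈ s, Real.sqrt p := by
  induction s using Finset.cons_induction with
  | empty => simp
  | cons a s ha ih =>
    rw [Finset.prod_cons, Finset.prod_cons, Real.sqrt_mul (Nat.cast_nonneg a), ih]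

private lemma aux_totient_small (δ : ℝ) (hδ : 0 < δ) :
    ∃ a : ℕ, 0 < a ∧ (Nat.totient a : ℝ) ≤ δ * a := by
  have hdiv : ¬ Summable (Set.indicator {p | Nat.Prime p} (fun n : ℕ ↦ (1 : ℝ) / n)) :=
    not_summable_one_div_on_primes
  have hnn : ∀ i, 0 ≤ Set.indicator {p | Nat.Prime p} (fun n : ℕ ↦ (1 : ℝ) / n) i := by
    intro i
    apply Set.indicator_nonneg
    intro x _
    positivity
  have htend := (not_summable_iff_tendsto_nat_atTop_of_nonneg hnn).mp hdiv
  obtain ⟨N, hN⟩ := (htend.eventually_ge_atTop (Real.log (1/δ))).exists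
  have hsum : ∑ i ∈ Finset.range N, Set.indicator {p | Nat.Prime p} (fun n : ℕ ↦ (1 : ℝ) / n) i
      = ∑ p ∈ N.primesBelow, 1 / (p:ℝ) := by
    rw [Finset.sum_indicator_eq_sum_filter]
    rfl
  set P := N.primesBelow with hP
  have hPprime : ∀ p ∈ P, Nat.Prime p := fun p hp => Nat.prime_of_mem_primesBelow hp
  refine ⟨∏ p ∈ P, p, Finset.prod_pos (fun p hp => (hPprime p hp).pos), ?_⟩
  have hfac : (∏ p ∈ P, p).primeFactors = P := Nat.primeFactors_prod hPprime
  have htot : ((∏ p ∈ P, p).totient : ℝ) = (∏ p ∈ P, p : ℕ) * ∏ p ∈ P, (1 - (p:ℝ)⁻¹) := by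
    have h := Nat.totient_eq_mul_prod_factors (∏ p ∈ P, p)
    rw [hfac] at h
    have := congrArg (fun x : ℚ => (x : ℝ)) h
    push_cast at this ⊢
    convert this using 2
  rw [htot]
  rw [mul_comm δ _]
  apply mul_le_mul_of_nonneg_left _ (by positivity)
  calc ∏ p ∈ P, (1 - (p:ℝ)⁻¹) ≤ ∏ p ∈ P, Real.exp (-(p:ℝ)⁻¹) := by
        apply Finset.prod_le_prod
        · intro p hp
          have h2 : 2 ≤ p := (hPprime p hp).two_le
          have : (p:ℝ)⁻¹ ≤ 1 := by
            rw [inv_le_one_iff₀]; right; exact_mod_cast le_trans one_le_two h2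
          linarith
        · intro p hp
          have := Real.add_one_le_exp (-(p:ℝ)⁻¹)
          linarith
    _ = Real.exp (-∑ p ∈ P, (p:ℝ)⁻¹) := by rw [← Real.exp_sum]; congr 1; rw [Finset.sum_neg_distrib]
    _ ≤ δ := by
        rw [hsum] at hN
        have hlog : Real.log (1/δ) ≤ ∑ p ∈ P, (p:ℝ)⁻¹ := by
          simpa [one_div] using hN
        have : -∑ p ∈ P, (p:ℝ)⁻¹ ≤ Real.log δ := by
          rw [one_div, Real.log_inv] at hlog
          linarith
        calc Real.exp (-∑ p ∈ P, (p:ℝ)⁻¹) ≤ Real.exp (Real.log δ) := Real.exp_le_exp.mpr this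
          _ = δ := Real.exp_log hδ

private lemma aux_pi_linear (δ : ℝ) (hδ : 0 < δ) :
    ∃ M : ℝ, 0 < M ∧ ∀ n : ℕ, (Nat.primeCounting' n : ℝ) ≤ δ * n + M := by
  obtain ⟨a, ha, hφ⟩ := aux_totient_small δ hδ
  refine ⟨(Nat.primeCounting' (a+1) : ℝ) + (Nat.totient a : ℝ) + 1, by positivity, ?_⟩
  intro n
  rcases le_or_gt n (a+1) with h | h
  · have : Nat.primeCounting' n ≤ Nat.primeCounting' (a+1) :=
      Nat.monotone_primeCounting' h
    have hδn : 0 ≤ δ * n := by positivity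
    have := (Nat.cast_le (α := ℝ)).mpr this
    linarith [Nat.cast_nonneg (α := ℝ) (Nat.totient a)]
  · set m := n - (a+1) with hm
    have hn : n = (a+1) + m := by omega
    have hb := Nat.primeCounting'_add_le (a := a) (k := a+1) ha.ne' (lt_add_one a) m
    rw [← hn] at hb
    have hb' := (Nat.cast_le (α := ℝ)).mpr hb
    push_cast at hb'
    have h1 : ((m / a : ℕ) : ℝ) ≤ (m : ℝ) / a := Nat.cast_div_le
    have ha' : (0:ℝ) < a := by exact_mod_cast ha
    have h2 : (Nat.totient a : ℝ) * ((m / a : ℕ) : ℝ) ≤ δ * m := by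
      calc (Nat.totient a : ℝ) * ((m / a : ℕ) : ℝ) ≤ (δ * a) * ((m:ℝ) / a) := by
            apply mul_le_mul hφ h1 (Nat.cast_nonneg _) (by positivity)
        _ = δ * m := by field_simp
    have h3 : (m:ℝ) ≤ n := by exact_mod_cast Nat.sub_le n (a+1)
    have h4 : δ * m ≤ δ * n := by nlinarith
    nlinarith [hb']


private lemma aux_sum_primes (ε : ℝ) (hε : 0 < ε) :
    ∃ M : ℝ, 0 < M ∧ ∀ P : Finset ℕ, (∀ p ∈ P, Nat.Prime p) →
      ∑ p ∈ P, 1 / Real.sqrt p ≤ ε * Real.sqrt P.card + M := by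
  set δ : ℝ := min (ε^2/8) 1 with hδdef
  have hδ : 0 < δ := lt_min (by positivity) one_pos
  have hδ1 : δ ≤ 1 := min_le_right _ _
  have hδε : 2*δ ≤ ε^2/4 := by
    have := min_le_left (ε^2/8) 1
    calc 2*δ ≤ 2*(ε^2/8) := by linarith
      _ = ε^2/4 := by ring
  obtain ⟨M₀, hM₀, hπ⟩ := aux_pi_linear δ hδ
  set f : ℕ → ℝ := fun j => if (j:ℝ) ≤ 2*(M₀+1) then 1 else Real.sqrt (2*δ) / Real.sqrt j
    with hfdef
  have key : ∀ n : ℕ, ∀ P : Finset ℕ, P.card = n → (∀ p ∈ P, Nat.Prime p) →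
      ∑ p ∈ P, 1 / Real.sqrt p ≤ ∑ j ∈ Finset.range n, f (j+1) := by
    intro n
    induction n with
    | zero =>
      intro P hcard _
      rw [Finset.card_eq_zero.mp hcard]
      simp
    | succ n ih =>
      intro P hcard hPr
      have hne : P.Nonempty := Finset.card_pos.mp (by omega)
      set p := P.max' hne with hpdef
      have hp : p ∈ P := P.max'_mem hne
      have hpprime : Nat.Prime p := hPr p hp
      have hcard' : (P.erase p).card = n := by
        rw [Finset.card_erase_of_mem hp, hcard]
        omega
      have hih := ih (P.erase p) hcard' (fun q hq => hPr q (Finset.mem_of_mem_erase hq))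
      rw [← Finset.sum_erase_add P _ hp, Finset.sum_range_succ]
      have hterm : 1 / Real.sqrt p ≤ f (n+1) := by
        rw [hfdef]
        simp only []
        split_ifs with h
        · rw [div_le_one (Real.sqrt_pos.mpr (by exact_mod_cast hpprime.pos))]
          have : (1:ℝ) ≤ p := by exact_mod_cast hpprime.one_lt.le
          exact Real.one_le_sqrt.mpr this
        · push_neg at h
          have hsub : P ⊆ Nat.primesBelow (p+1) := by
            intro q hq
            exact Nat.mem_primesBelow.mpr ⟨Nat.lt_succ_of_le (P.le_max' q hq), hPr q hq⟩
          have hcount : (n+1 : ℝ) ≤ δ * (p+1) + M₀ := by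
            have h1 : P.card ≤ (Nat.primesBelow (p+1)).card := Finset.card_le_card hsub
            rw [Nat.primesBelow_card_eq_primeCounting'] at h1
            have := hπ (p+1)
            have h2 : ((n+1 : ℕ) : ℝ) ≤ (Nat.primeCounting' (p+1) : ℝ) := by
              exact_mod_cast hcard ▸ h1
            push_cast at h2 this ⊢
            linarith
          have hcast : ((n+1 : ℕ):ℝ) = (n:ℝ)+1 := by push_cast; ring
          rw [hcast] at h
          have hkey : (n:ℝ)+1 ≤ 2*δ*p := by
            have hhalf : M₀ + 1 ≤ ((n:ℝ)+1)/2 := by linarith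
            have : δ*((p:ℝ)+1) ≥ ((n:ℝ)+1) - M₀ := by linarith
            nlinarith
          have hppos : (0:ℝ) < Real.sqrt p := Real.sqrt_pos.mpr (by exact_mod_cast hpprime.pos)
          have hnpos : (0:ℝ) < Real.sqrt ((n+1:ℕ):ℝ) := Real.sqrt_pos.mpr (by push_cast; linarith)
          rw [div_le_div_iff₀ hppos hnpos]
          calc 1 * Real.sqrt ((n+1:ℕ):ℝ) = Real.sqrt ((n:ℝ)+1) := by rw [one_mul, hcast]
            _ ≤ Real.sqrt (2*δ*p) := Real.sqrt_le_sqrt hkey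
            _ = Real.sqrt (2*δ) * Real.sqrt p := Real.sqrt_mul (by positivity) _
      linarith
  refine ⟨2*(M₀+1)+1, by positivity, ?_⟩
  intro P hPr
  refine (key P.card P rfl hPr).trans ?_
  have hbound : ∀ j ∈ Finset.range P.card,
      f (j+1) ≤ (if ((j:ℝ)+1) ≤ 2*(M₀+1) then (1:ℝ) else 0) + (ε/2) * (1 / Real.sqrt (j+1)) := by
    intro j _
    have hcast : ((j+1 : ℕ):ℝ) = (j:ℝ)+1 := by push_cast; ring
    rw [hfdef]
    simp only [hcast]
    have hs : (0:ℝ) < Real.sqrt ((j:ℝ)+1) := Real.sqrt_pos.mpr (by positivity)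
    split_ifs with h
    · have : (0:ℝ) ≤ (ε/2) * (1 / Real.sqrt ((j:ℝ)+1)) := by positivity
      linarith
    · have h2 : Real.sqrt (2*δ) ≤ ε/2 := by
        calc Real.sqrt (2*δ) ≤ Real.sqrt (ε^2/4) := Real.sqrt_le_sqrt hδε
          _ = ε/2 := by
              rw [show ε^2/4 = (ε/2)^2 by ring, Real.sqrt_sq (by positivity)]
      rw [zero_add, div_eq_mul_one_div]
      exact mul_le_mul_of_nonneg_right h2 (by positivity)
  calc ∑ j ∈ Finset.range P.card, f (j+1)
      ≤ ∑ j ∈ Finset.range P.card,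
        ((if ((j:ℝ)+1) ≤ 2*(M₀+1) then (1:ℝ) else 0) + (ε/2) * (1 / Real.sqrt (j+1))) :=
        Finset.sum_le_sum hbound
    _ = (∑ j ∈ Finset.range P.card, if ((j:ℝ)+1) ≤ 2*(M₀+1) then (1:ℝ) else 0)
        + (ε/2) * ∑ j ∈ Finset.range P.card, 1 / Real.sqrt (j+1) := by
        rw [Finset.sum_add_distrib, Finset.mul_sum]
    _ ≤ (2*(M₀+1)+1) + (ε/2) * (2 * Real.sqrt P.card) := by
        apply add_le_add
        · rw [Finset.sum_boole]
          have hsub2 : (Finset.range P.card).filter (fun j : ℕ => ((j:ℝ)+1) ≤ 2*(M₀+1))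
              ⊆ Finset.range ⌈2*(M₀+1)⌉₊ := by
            intro j hj
            rw [Finset.mem_filter] at hj
            rw [Finset.mem_range]
            exact Nat.lt_ceil.mpr (by linarith [hj.2])
          have hc := Finset.card_le_card hsub2
          rw [Finset.card_range] at hc
          have hceil : (⌈2*(M₀+1)⌉₊ : ℝ) ≤ 2*(M₀+1)+1 := (Nat.ceil_lt_add_one (by positivity)).le
          calc ((Finset.filter (fun j : ℕ => ((j:ℝ)+1) ≤ 2*(M₀+1)) (Finset.range P.card)).card : ℝ)
              ≤ (⌈2*(M₀+1)⌉₊ : ℝ) := by exact_mod_cast hc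
            _ ≤ 2*(M₀+1)+1 := hceil
        · apply mul_le_mul_of_nonneg_left (aux_sum_one_div_sqrt_le P.card) (by positivity)
    _ = ε * Real.sqrt P.card + (2*(M₀+1)+1) := by ring


theorem sum_divisors_many_prime_factors (K₁ : ℝ) (hK : 0 < K₁) :
    ∃ C : ℝ, 0 < C ∧ ∀ q : ℕ, Squarefree q →
      (∑ c ∈ q.divisors,
          if Real.sqrt (q.primeFactors.card : ℝ) ≤ (c.primeFactors.card : ℝ) then
            K₁ ^ c.primeFactors.card / Real.sqrt (c : ℝ)
          else 0) ≤
        C * Real.exp (-C⁻¹ * Real.sqrt (q.primeFactors.card : ℝ)) := by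
  have he : (0:ℝ) < Real.exp 1 := Real.exp_pos 1
  set ε : ℝ := 1/(2 * Real.exp 1 * K₁) with hεdef
  have hε : 0 < ε := by positivity
  obtain ⟨M, hM, hsum⟩ := aux_sum_primes ε hε
  set C : ℝ := Real.exp (Real.exp 1 * K₁ * M) + 2 with hCdef
  have hC : 0 < C := by positivity
  refine ⟨C, hC, ?_⟩
  intro q hq
  have hq0 : q ≠ 0 := hq.ne_zero
  set P := q.primeFactors with hPdef
  set k : ℝ := Real.sqrt P.card with hkdef
  have hk0 : 0 ≤ k := Real.sqrt_nonneg _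
  -- termwise bound
  have hterm : ∀ c ∈ q.divisors,
      (if k ≤ (c.primeFactors.card : ℝ) then K₁ ^ c.primeFactors.card / Real.sqrt c else 0)
        ≤ Real.exp (-k) * ∏ p ∈ c.primeFactors, (Real.exp 1 * K₁ / Real.sqrt p) := by
    intro c hc
    obtain ⟨hcd, -⟩ := Nat.mem_divisors.mp hc
    have hc0 : 0 < c := Nat.pos_of_mem_divisors hc
    have hcsq : Squarefree c := hq.squarefree_of_dvd hcd
    have hprodc : (∏ p ∈ c.primeFactors, (p:ℝ)) = (c:ℝ) := by
      rw [← Nat.cast_prod, Nat.prod_primeFactors_of_squarefree hcsq]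
    have hprod : ∏ p ∈ c.primeFactors, (Real.exp 1 * K₁ / Real.sqrt p)
        = Real.exp (c.primeFactors.card) * K₁ ^ c.primeFactors.card / Real.sqrt c := by
      rw [Finset.prod_div_distrib, Finset.prod_const, ← aux_sqrt_prod, hprodc, mul_pow,
        ← Real.exp_one_pow]
    rw [hprod]
    split_ifs with h
    · have h1 : (1:ℝ) ≤ Real.exp (-k) * Real.exp (c.primeFactors.card) := by
        rw [← Real.exp_add]
        apply Real.one_le_exp
        linarith
      have h2 : (0:ℝ) ≤ K₁ ^ c.primeFactors.card / Real.sqrt c := by positivity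
      calc K₁ ^ c.primeFactors.card / Real.sqrt c
          = 1 * (K₁ ^ c.primeFactors.card / Real.sqrt c) := (one_mul _).symm
        _ ≤ (Real.exp (-k) * Real.exp (c.primeFactors.card))
              * (K₁ ^ c.primeFactors.card / Real.sqrt c) :=
            mul_le_mul_of_nonneg_right h1 h2
        _ = Real.exp (-k) * (Real.exp (c.primeFactors.card) * K₁ ^ c.primeFactors.card
              / Real.sqrt c) := by ring
    · positivity
  refine le_trans (Finset.sum_le_sum hterm) ?_
  rw [← Finset.mul_sum]
  -- bijection divisors ↔ powerset
  have hbij : ∑ c ∈ q.divisors, ∏ p ∈ c.primeFactors, (Real.exp 1 * K₁ / Real.sqrt p)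
      = ∑ S ∈ P.powerset, ∏ p ∈ S, (Real.exp 1 * K₁ / Real.sqrt p) := by
    apply Finset.sum_nbij' (i := fun c => c.primeFactors) (j := fun S => ∏ p ∈ S, p)
    · intro c hc
      exact Finset.mem_powerset.mpr
        (Nat.primeFactors_mono (Nat.mem_divisors.mp hc).1 hq0)
    · intro S hS
      have hSsub := Finset.mem_powerset.mp hS
      refine Nat.mem_divisors.mpr ⟨?_, hq0⟩
      calc ∏ p ∈ S, p ∣ ∏ p ∈ P, p :=
            Finset.prod_dvd_prod_of_subset S P _ hSsub
        _ = q := Nat.prod_primeFactors_of_squarefree hq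
    · intro c hc
      exact Nat.prod_primeFactors_of_squarefree
        (hq.squarefree_of_dvd (Nat.mem_divisors.mp hc).1)
    · intro S hS
      exact Nat.primeFactors_prod
        (fun p hp => Nat.prime_of_mem_primeFactors (Finset.mem_powerset.mp hS hp))
    · intro c hc
      rfl
  rw [hbij]
  -- powerset sum = product
  have hpe : ∑ S ∈ P.powerset, ∏ p ∈ S, (Real.exp 1 * K₁ / Real.sqrt p)
      = ∏ p ∈ P, (1 + Real.exp 1 * K₁ / Real.sqrt p) := by
    have hpa := Finset.prod_add (fun p : ℕ => Real.exp 1 * K₁ / Real.sqrt p)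
      (fun _ => (1:ℝ)) P
    simp only [Finset.prod_const_one, mul_one] at hpa
    rw [← hpa]
    exact Finset.prod_congr rfl (fun p _ => (add_comm _ _))
  rw [hpe]
  -- product ≤ exp of sum
  have hprodle : ∏ p ∈ P, (1 + Real.exp 1 * K₁ / Real.sqrt p)
      ≤ Real.exp (Real.exp 1 * K₁ * ∑ p ∈ P, 1 / Real.sqrt p) := by
    rw [Finset.mul_sum, Real.exp_sum]
    apply Finset.prod_le_prod
    · intro p hp
      have : (0:ℝ) ≤ Real.exp 1 * K₁ / Real.sqrt p := by positivity
      linarith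
    · intro p hp
      have := Real.add_one_le_exp (Real.exp 1 * K₁ / Real.sqrt p)
      calc 1 + Real.exp 1 * K₁ / Real.sqrt p
          = Real.exp 1 * K₁ / Real.sqrt p + 1 := by ring
        _ ≤ Real.exp (Real.exp 1 * K₁ / Real.sqrt p) := this
        _ = Real.exp (Real.exp 1 * K₁ * (1 / Real.sqrt p)) := by rw [mul_one_div]
  -- assemble
  have hsP : ∑ p ∈ P, 1 / Real.sqrt p ≤ ε * k + M :=
    hsum P (fun p hp => Nat.prime_of_mem_primeFactors hp)
  have heK : Real.exp 1 * K₁ * ε = 1/2 := by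
    rw [hεdef]; field_simp
  have hfinal : Real.exp (-k) * ∏ p ∈ P, (1 + Real.exp 1 * K₁ / Real.sqrt p)
      ≤ Real.exp (Real.exp 1 * K₁ * M) * Real.exp (-(1/2) * k) := by
    calc Real.exp (-k) * ∏ p ∈ P, (1 + Real.exp 1 * K₁ / Real.sqrt p)
        ≤ Real.exp (-k) * Real.exp (Real.exp 1 * K₁ * ∑ p ∈ P, 1 / Real.sqrt p) :=
          mul_le_mul_of_nonneg_left hprodle (Real.exp_nonneg _)
      _ ≤ Real.exp (-k) * Real.exp (Real.exp 1 * K₁ * (ε * k + M)) := by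
          apply mul_le_mul_of_nonneg_left _ (Real.exp_nonneg _)
          apply Real.exp_le_exp.mpr
          apply mul_le_mul_of_nonneg_left hsP (by positivity)
      _ = Real.exp (Real.exp 1 * K₁ * M) * Real.exp (-(1/2) * k) := by
          rw [← Real.exp_add, ← Real.exp_add]
          congr 1
          have : Real.exp 1 * K₁ * (ε * k + M)
              = (Real.exp 1 * K₁ * ε) * k + Real.exp 1 * K₁ * M := by ring
          rw [this, heK]
          ring
  refine hfinal.trans ?_
  have h1 : Real.exp (Real.exp 1 * K₁ * M) ≤ C := by
    rw [hCdef]; linarith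
  have h2 : Real.exp (-(1/2) * k) ≤ Real.exp (-C⁻¹ * k) := by
    apply Real.exp_le_exp.mpr
    have hCinv : C⁻¹ ≤ 1/2 := by
      rw [inv_le_comm₀ hC (by norm_num)]
      rw [hCdef]
      have := Real.exp_nonneg (Real.exp 1 * K₁ * M)
      linarith
    nlinarith
  calc Real.exp (Real.exp 1 * K₁ * M) * Real.exp (-(1/2) * k)
      ≤ C * Real.exp (-(1/2) * k) :=
        mul_le_mul_of_nonneg_right h1 (Real.exp_nonneg _)
    _ ≤ C * Real.exp (-C⁻¹ * k) := mul_le_mul_of_nonneg_left h2 hC.le
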